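/- For every n ≥ 1, the topological complexity of the minimal finite model 𝕊ⁿ of the n-sphere equals 4: TC(𝕊ⁿ) = 4. -/

import Mathlib

open Set

/-- `Q ⊆ X × X` admits a motion planner: a continuous map `s` from `Q` to the path
space `P(X) = C(I, X)` (with the compact-open topology) that is a section of the
endpoint map `π : C(I, X) → X × X`, `γ ↦ (γ 0, γ 1)`. -/
def AdmitsMotionPlanner {X : Type*} [TopologicalSpace X] (Q : Set (X × X)) : Prop :=
  ∃ s : C(Q, C(unitInterval, X)), ∀ q : Q, ((s q) 0, (s q) 1) = (q : X × X)

/-- `X × X` is covered by `k` open sets, each admitting a motion planner. -/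
def TCCover (X : Type*) [TopologicalSpace X] (k : ℕ) : Prop :=
  ∃ Q : Fin k → Set (X × X),
    (∀ i, IsOpen (Q i)) ∧ (⋃ i, Q i) = Set.univ ∧ ∀ i, AdmitsMotionPlanner (Q i)

/-- The (unreduced) topological complexity of `X`: the least `k` such that `X × X`
can be covered by `k` open sets, each admitting a motion planner. -/
noncomputable def topologicalComplexity (X : Type*) [TopologicalSpace X] : ℕ :=
  sInf {k | TCCover X k}
/-- The non-Hausdorff join `X ⊛ Y` of two (finite, Alexandrov) spaces: the disjoint
union `X ⊕ Y` with each factor keeping its topology (order), and `x < y` for every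
`x ∈ X`, `y ∈ Y`.  The open sets (down-sets) are those whose two parts are open and
which contain all of `X` whenever they meet `Y`. -/
def NHJoinTop (X Y : Type*) [TopologicalSpace X] [TopologicalSpace Y] :
    TopologicalSpace (X ⊕ Y) where
  IsOpen U := IsOpen (Sum.inl ⁻¹' U) ∧ IsOpen (Sum.inr ⁻¹' U) ∧
    ((∃ y, Sum.inr y ∈ U) → ∀ x, Sum.inl x ∈ U)
  isOpen_univ := ⟨isOpen_univ, isOpen_univ, fun _ _ => trivial⟩
  isOpen_inter := fun U V hU hV =>
    ⟨hU.1.inter hV.1, hU.2.1.inter hV.2.1,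
      fun ⟨y, hy⟩ x => ⟨hU.2.2 ⟨y, hy.1⟩ x, hV.2.2 ⟨y, hy.2⟩ x⟩⟩
  isOpen_sUnion := fun S hS => by
    refine ⟨?_, ?_, ?_⟩
    · rw [Set.preimage_sUnion]
      exact isOpen_biUnion fun t ht => (hS t ht).1
    · rw [Set.preimage_sUnion]
      exact isOpen_biUnion fun t ht => (hS t ht).2.1
    · rintro ⟨y, U, hUS, hyU⟩ x
      exact ⟨U, hUS, (hS U hUS).2.2 ⟨y, hyU⟩ x⟩

/-- The underlying set of the minimal finite model `𝕊ⁿ` of the `n`-sphere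
(`2n + 2` points): `𝕊⁰` is the two-point discrete space and `𝕊ⁿ = 𝕊ⁿ⁻¹ ⊛ 𝕊⁰`. -/
def SpherePt : ℕ → Type
  | 0 => Bool
  | n + 1 => SpherePt n ⊕ Bool

/-- The topology of the minimal finite model `𝕊ⁿ`: discrete for `n = 0`, and the
non-Hausdorff join (suspension) topology `𝕊ⁿ⁻¹ ⊛ 𝕊⁰` for `n ≥ 1`. -/
def sphereTop : (n : ℕ) → TopologicalSpace (SpherePt n)
  | 0 => ⊥
  | n + 1 => @NHJoinTop (SpherePt n) Bool (sphereTop n) inferInstance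

instance instSph (n : ℕ) : TopologicalSpace (SpherePt n) := sphereTop n

instance instSphFin : ∀ n, Finite (SpherePt n)
  | 0 => inferInstanceAs (Finite Bool)
  | n+1 => letI := instSphFin n; inferInstanceAs (Finite (SpherePt n ⊕ Bool))

def lvl : (n : ℕ) → SpherePt n → ℕ
  | 0, _ => 0
  | n+1, Sum.inl x => lvl n x
  | n+1, Sum.inr _ => n+1

lemma lvl_le : ∀ n (x : SpherePt n), lvl n x ≤ n
  | 0, _ => le_rfl
  | n+1, Sum.inl x => (lvl_le n x).trans (Nat.le_succ n)
  | _+1, Sum.inr _ => le_rfl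

lemma isOpen_iff : ∀ (n : ℕ) (U : Set (SpherePt n)),
    IsOpen U ↔ ∀ x ∈ U, ∀ y, lvl n y < lvl n x → y ∈ U := by
  intro n
  induction n with
  | zero =>
    intro U
    constructor
    · intro _ x hx y hy
      exact absurd (hy : (0:ℕ) < 0) (lt_irrefl 0)
    · intro _
      letI : TopologicalSpace (SpherePt 0) := ⊥
      haveI : DiscreteTopology (SpherePt 0) := ⟨rfl⟩
      exact isOpen_discrete U
  | succ n ih =>
    intro U
    constructor
    · intro hU
      obtain ⟨hl, hr, hmix⟩ :
          IsOpen (Sum.inl ⁻¹' U) ∧ IsOpen (Sum.inr ⁻¹' U) ∧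
            ((∃ y, Sum.inr y ∈ U) → ∀ x : SpherePt n, Sum.inl x ∈ U) := hU
      intro x hx y hy
      cases x with
      | inl x' =>
        cases y with
        | inl y' => exact (ih _).1 hl x' hx y' hy
        | inr b =>
          have h1 : (n+1 : ℕ) < lvl n x' := hy
          have := lvl_le n x'
          omega
      | inr b =>
        cases y with
        | inl y' => exact hmix ⟨b, hx⟩ y'
        | inr b' => exact absurd (hy : (n+1:ℕ) < n+1) (lt_irrefl _)
    · intro h
      refine ⟨(ih _).2 ?_, isOpen_discrete _, ?_⟩
      · intro x hx y hy
        exact h (Sum.inl x) hx (Sum.inl y) (show lvl n y < lvl n x from hy)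
      · rintro ⟨b, hb⟩ x
        have := lvl_le n x
        exact h _ hb (Sum.inl x) (show lvl n x < n+1 by omega)

def Spec (n : ℕ) (x y : SpherePt n) : Prop := x = y ∨ lvl n x < lvl n y

lemma spec_trans {n : ℕ} {x y z : SpherePt n} (h1 : Spec n x y) (h2 : Spec n y z) :
    Spec n x z := by
  rcases h1 with rfl | h1
  · exact h2
  · rcases h2 with rfl | h2
    · exact Or.inr h1
    · exact Or.inr (h1.trans h2)

lemma spec_iff (n : ℕ) (x y : SpherePt n) : Spec n x y ↔ x ⤳ y := by
  constructor
  · intro h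
    rw [specializes_iff_forall_open]
    intro U hU hyU
    rcases h with rfl | h
    · exact hyU
    · exact (isOpen_iff n U).1 hU y hyU x h
  · intro h
    have hop : IsOpen {z | Spec n z y} := by
      rw [isOpen_iff]
      intro z hz w hw
      exact spec_trans (Or.inr hw) hz
    exact h.mem_open hop (Or.inl rfl)

def node : (n : ℕ) → ℕ → Bool → SpherePt n
  | 0, _, b => b
  | n+1, k, b => if k ≤ n then Sum.inl (node n k b) else Sum.inr b

lemma node_succ (n k : ℕ) (b : Bool) :
    node (n+1) k b = (if k ≤ n then Sum.inl (node n k b) else Sum.inr b : SpherePt n ⊕ Bool) :=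
  rfl

lemma lvl_node : ∀ n k b, k ≤ n → lvl n (node n k b) = k
  | 0, k, b, h => by have : k = 0 := Nat.le_zero.mp h; subst this; rfl
  | n+1, k, b, h => by
    rw [node_succ]
    split
    · exact lvl_node n k b ‹_›
    · show n+1 = k; omega

lemma node_ne : ∀ n k, node n k true ≠ node n k false
  | 0, k => by show (true : Bool) ≠ false; decide
  | n+1, k => by
    by_cases hk : k ≤ n
    · rw [node_succ, node_succ, if_pos hk, if_pos hk]
      intro h
      exact node_ne n k (Sum.inl.inj h)
    · rw [node_succ, node_succ, if_neg hk, if_neg hk]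
      intro h
      simpa using Sum.inr.inj h

lemma top_or_lvl_lt : ∀ (n : ℕ) (x : SpherePt n),
    x = node n n true ∨ x = node n n false ∨ lvl n x < n
  | 0, x => by
    cases x
    · exact Or.inr (Or.inl rfl)
    · exact Or.inl rfl
  | n+1, x => by
    cases x with
    | inl x' =>
      right; right
      show lvl n x' < n+1
      have := lvl_le n x'
      omega
    | inr b =>
      have hnode : ∀ c : Bool, node (n+1) (n+1) c = Sum.inr c := by
        intro c; rw [node_succ, if_neg (Nat.not_succ_le_self n)]
      cases b
      · exact Or.inr (Or.inl (hnode false).symm)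
      · exact Or.inl (hnode true).symm

lemma eq_id_of_spec_le {n : ℕ} {ψ : SpherePt n → SpherePt n}
    (hmono : ∀ a b, Spec n a b → Spec n (ψ a) (ψ b))
    (hle : ∀ a, Spec n (ψ a) a) : ∀ a, ψ a = a := by
  suffices H : ∀ k, ∀ a : SpherePt n, lvl n a ≤ k → ψ a = a from
    fun a => H (lvl n a) a le_rfl
  intro k
  induction k with
  | zero =>
    intro a ha
    rcases hle a with h | h
    · exact h
    · omega
  | succ k ih =>
    intro a ha
    rcases hle a with h | h
    · exact h
    by_cases hk : lvl n a ≤ k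
    · exact ih a hk
    have hak : lvl n a = k + 1 := by omega
    have hkn : k ≤ n := by have := lvl_le n a; omega
    have hnode : ∀ b : Bool, ψ (node n k b) = node n k b := fun b =>
      ih _ (le_of_eq (lvl_node n k b hkn))
    have hcol : ∀ b : Bool, node n k b = ψ a := by
      intro b
      have hs1 : Spec n (node n k b) a := Or.inr (by rw [lvl_node n k b hkn]; omega)
      have h2 := hmono _ _ hs1
      rw [hnode b] at h2
      rcases h2 with h' | h'
      · exact h'
      · exfalso; rw [lvl_node n k b hkn] at h'; omega
    exact absurd ((hcol true).trans (hcol false).symm) (node_ne n k)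

lemma eq_id_of_spec_ge {n : ℕ} {ψ : SpherePt n → SpherePt n}
    (hmono : ∀ a b, Spec n a b → Spec n (ψ a) (ψ b))
    (hge : ∀ a, Spec n a (ψ a)) : ∀ a, ψ a = a := by
  suffices H : ∀ k, ∀ a : SpherePt n, n - lvl n a ≤ k → ψ a = a from
    fun a => H (n - lvl n a) a le_rfl
  intro k
  induction k with
  | zero =>
    intro a ha
    rcases hge a with h | h
    · exact h.symm
    · have h1 := lvl_le n a
      have h2 := lvl_le n (ψ a)
      omega
  | succ k ih =>
    intro a ha
    rcases hge a with h | h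
    · exact h.symm
    by_cases hk : n - lvl n a ≤ k
    · exact ih a hk
    set m := lvl n a with hm
    have hm1 : m + 1 ≤ n := by have := lvl_le n (ψ a); omega
    have hnode : ∀ b : Bool, ψ (node n (m+1) b) = node n (m+1) b := fun b =>
      ih _ (by rw [lvl_node n (m+1) b hm1]; omega)
    have hcol : ∀ b : Bool, ψ a = node n (m+1) b := by
      intro b
      have hs1 : Spec n a (node n (m+1) b) := Or.inr (by rw [lvl_node n (m+1) b hm1]; omega)
      have h2 := hmono _ _ hs1
      rw [hnode b] at h2
      rcases h2 with h' | h'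
      · exact h'
      · exfalso; rw [lvl_node n (m+1) b hm1] at h'; omega
    exact absurd ((hcol true).symm.trans (hcol false)) (node_ne n (m+1))

section FiniteSpace
variable {X Y : Type*} [TopologicalSpace X] [TopologicalSpace Y]

lemma isOpen_of_spec_closed [Finite X] {S : Set X}
    (h : ∀ x ∈ S, ∀ y : X, y ⤳ x → y ∈ S) : IsOpen S := by
  have key : ∀ x : X, IsOpen {y : X | y ⤳ x} := by
    intro x
    have heq : {y : X | y ⤳ x} = ⋂₀ {U : Set X | IsOpen U ∧ x ∈ U} := by
      ext y
      simp only [mem_setOf_eq, mem_sInter]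
      rw [specializes_iff_forall_open]
      exact ⟨fun h U hU => h U hU.1 hU.2, fun h U hU hx => h U ⟨hU, hx⟩⟩
    rw [heq]
    exact Set.Finite.isOpen_sInter (Set.toFinite _) (fun U hU => hU.1)
  have heq : S = ⋃ x ∈ S, {y | y ⤳ x} := by
    apply subset_antisymm
    · intro x hx; exact mem_biUnion hx (specializes_refl x)
    · intro y hy
      rcases mem_iUnion₂.1 hy with ⟨x, hx, hyx⟩
      exact h x hx y hyx
  rw [heq]
  exact isOpen_biUnion fun x _ => key x

lemma continuous_of_spec_mono [Finite X] {f : X → Y}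
    (h : ∀ a b : X, a ⤳ b → f a ⤳ f b) : Continuous f := by
  rw [continuous_def]
  intro U hU
  apply isOpen_of_spec_closed
  intro a ha b hba
  exact (h b a hba).mem_open hU ha

lemma cm_specializes_of_forall {f g : C(X, Y)} (h : ∀ t, f t ⤳ g t) : f ⤳ g := by
  rw [specializes_iff_forall_open]
  intro U hU hgU
  have hU' : TopologicalSpace.GenerateOpen
      (Set.image2 (fun K U => {f : C(X,Y) | Set.MapsTo f K U}) {K | IsCompact K} {U | IsOpen U})
      U := hU
  clear hU
  revert hgU
  induction hU' with
  | basic V hV =>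
    obtain ⟨K, hK, W, hW, rfl⟩ := hV
    intro hgU t ht
    exact (h t).mem_open hW (hgU ht)
  | univ => intro _; trivial
  | inter V W _ _ ihV ihW => intro hgU; exact ⟨ihV hgU.1, ihW hgU.2⟩
  | sUnion S _ ih =>
    rintro ⟨V, hV, hgV⟩
    exact ⟨V, hV, ih V hV hgV⟩

lemma subtype_specializes {P : Set X} {a b : P} (h : (a : X) ⤳ (b : X)) : a ⤳ b := by
  rw [specializes_iff_forall_open] at h ⊢
  intro U hU hb
  obtain ⟨V, hV, rfl⟩ := isOpen_induced_iff.1 hU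
  exact h V hV hb

end FiniteSpace

noncomputable def pathFun (n : ℕ) (e d : Bool) (x y : SpherePt n) (t : unitInterval) : SpherePt n :=
  if (t : ℝ) < 4⁻¹ then x
  else if (t : ℝ) = 4⁻¹ then node n n e
  else if (t : ℝ) < 3/4 then node n 0 true
  else if (t : ℝ) = 3/4 then node n n d
  else y

lemma pathFun_zero (n : ℕ) (e d : Bool) (x y : SpherePt n) : pathFun n e d x y 0 = x := by
  rw [pathFun, if_pos]
  show (0:ℝ) < 4⁻¹
  norm_num

lemma pathFun_one (n : ℕ) (e d : Bool) (x y : SpherePt n) : pathFun n e d x y 1 = y := by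
  rw [pathFun]
  have h1 : ((1 : unitInterval) : ℝ) = 1 := rfl
  rw [h1, if_neg (by norm_num), if_neg (by norm_num), if_neg (by norm_num),
    if_neg (by norm_num)]

lemma pathFun_spec {n : ℕ} {e d : Bool} {x y x' y' : SpherePt n}
    (hx : Spec n x x') (hy : Spec n y y') (t : unitInterval) :
    Spec n (pathFun n e d x y t) (pathFun n e d x' y' t) := by
  rw [pathFun, pathFun]
  split_ifs
  · exact hx
  · exact Or.inl rfl
  · exact Or.inl rfl
  · exact Or.inl rfl
  · exact hy

lemma pathFun_continuous {n : ℕ} (hn : 1 ≤ n) {e d : Bool} {x y : SpherePt n}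
    (hx : Spec n x (node n n e)) (hy : Spec n y (node n n d)) :
    Continuous (pathFun n e d x y) := by
  have hlvl0 : lvl n (node n 0 true) = 0 := lvl_node n 0 true (Nat.zero_le n)
  have hlvln : ∀ c, lvl n (node n n c) = n := fun c => lvl_node n n c le_rfl
  rw [continuous_def]
  intro U hU
  have hdn : ∀ a ∈ U, ∀ b, Spec n b a → b ∈ U := by
    intro a ha b hb
    rcases hb with rfl | hb
    · exact ha
    · exact (isOpen_iff n U).1 hU a ha b hb
  rw [isOpen_iff_forall_mem_open]
  intro t ht
  rw [mem_preimage] at ht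
  rcases lt_trichotomy ((t:ℝ)) 4⁻¹ with h1 | h1 | h1
  · rw [pathFun, if_pos h1] at ht
    refine ⟨{s : unitInterval | (s:ℝ) < 4⁻¹}, ?_, ?_, h1⟩
    · intro s hs
      rw [mem_setOf_eq] at hs
      show pathFun n e d x y s ∈ U
      rw [pathFun, if_pos hs]
      exact ht
    · exact isOpen_Iio.preimage continuous_subtype_val
  · rw [pathFun, if_neg (by rw [h1]; exact lt_irrefl _), if_pos h1] at ht
    have hxU : x ∈ U := hdn _ ht x hx
    have hbU : node n 0 true ∈ U := hdn _ ht _ (Or.inr (by rw [hlvl0, hlvln]; omega))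
    refine ⟨{s : unitInterval | (s:ℝ) < 3/4}, ?_, ?_, by rw [mem_setOf_eq, h1]; norm_num⟩
    · intro s hs
      rw [mem_setOf_eq] at hs
      show pathFun n e d x y s ∈ U
      rw [pathFun]
      rcases lt_trichotomy ((s:ℝ)) 4⁻¹ with g | g | g
      · rw [if_pos g]; exact hxU
      · rw [if_neg (by rw [g]; exact lt_irrefl _), if_pos g]; exact ht
      · rw [if_neg (by linarith), if_neg (by linarith), if_pos hs]; exact hbU
    · exact isOpen_Iio.preimage continuous_subtype_val
  · rcases lt_trichotomy ((t:ℝ)) (3/4) with h2 | h2 | h2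
    · rw [pathFun, if_neg (by linarith), if_neg (by linarith), if_pos h2] at ht
      refine ⟨{s : unitInterval | 4⁻¹ < (s:ℝ) ∧ (s:ℝ) < 3/4}, ?_, ?_, ⟨h1, h2⟩⟩
      · intro s hs
        rw [mem_setOf_eq] at hs
        show pathFun n e d x y s ∈ U
        rw [pathFun, if_neg (by linarith [hs.1]), if_neg (by linarith [hs.1]),
          if_pos hs.2]
        exact ht
      · exact ((isOpen_Ioi.preimage continuous_subtype_val).inter
          (isOpen_Iio.preimage continuous_subtype_val))
    · rw [pathFun, if_neg (by linarith), if_neg (by linarith), if_neg (by rw [h2]; exact lt_irrefl _),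
        if_pos h2] at ht
      have hyU : y ∈ U := hdn _ ht y hy
      have hbU : node n 0 true ∈ U := hdn _ ht _ (Or.inr (by rw [hlvl0, hlvln]; omega))
      refine ⟨{s : unitInterval | 4⁻¹ < (s:ℝ)}, ?_, ?_, h1⟩
      · intro s hs
        rw [mem_setOf_eq] at hs
        show pathFun n e d x y s ∈ U
        rw [pathFun, if_neg (by linarith), if_neg (by linarith)]
        rcases lt_trichotomy ((s:ℝ)) (3/4) with g | g | g
        · rw [if_pos g]; exact hbU
        · rw [if_neg (by rw [g]; exact lt_irrefl _), if_pos g]; exact ht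
        · rw [if_neg (by linarith), if_neg (by linarith)]; exact hyU
      · exact isOpen_Ioi.preimage continuous_subtype_val
    · rw [pathFun, if_neg (by linarith), if_neg (by linarith), if_neg (by linarith),
        if_neg (by linarith)] at ht
      refine ⟨{s : unitInterval | 3/4 < (s:ℝ)}, ?_, ?_, h2⟩
      · intro s hs
        rw [mem_setOf_eq] at hs
        show pathFun n e d x y s ∈ U
        rw [pathFun, if_neg (by linarith), if_neg (by linarith), if_neg (by linarith),
          if_neg (by linarith)]
        exact ht
      · exact isOpen_Ioi.preimage continuous_subtype_val

def rect (n : ℕ) (e d : Bool) : Set (SpherePt n × SpherePt n) :=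
  {p | Spec n p.1 (node n n e) ∧ Spec n p.2 (node n n d)}

lemma rect_open (n : ℕ) (e d : Bool) : IsOpen (rect n e d) := by
  apply isOpen_of_spec_closed
  intro p hp q hq
  have h1 : q.1 ⤳ p.1 := hq.fst
  have h2 : q.2 ⤳ p.2 := hq.snd
  exact ⟨spec_trans ((spec_iff n _ _).2 h1) hp.1, spec_trans ((spec_iff n _ _).2 h2) hp.2⟩

lemma rect_planner (n : ℕ) (hn : 1 ≤ n) (e d : Bool) : AdmitsMotionPlanner (rect n e d) := by
  refine ⟨⟨fun q => ⟨pathFun n e d (q : SpherePt n × SpherePt n).1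
    (q : SpherePt n × SpherePt n).2, pathFun_continuous hn q.2.1 q.2.2⟩, ?_⟩, ?_⟩
  · apply continuous_of_spec_mono
    intro q q' hqq'
    apply cm_specializes_of_forall
    intro t
    have hv : (q : SpherePt n × SpherePt n) ⤳ (q' : SpherePt n × SpherePt n) :=
      hqq'.map continuous_subtype_val
    exact (spec_iff n _ _).1
      (pathFun_spec ((spec_iff n _ _).2 hv.fst) ((spec_iff n _ _).2 hv.snd) t)
  · intro q
    show (pathFun n e d _ _ 0, pathFun n e d _ _ 1) = _
    rw [pathFun_zero, pathFun_one]

lemma upper_bound (n : ℕ) (hn : 1 ≤ n) : TCCover (SpherePt n) 4 := by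
  refine ⟨![rect n true true, rect n true false, rect n false true, rect n false false],
    ?_, ?_, ?_⟩
  · intro i
    fin_cases i <;> exact rect_open n _ _
  · rw [Set.eq_univ_iff_forall]
    intro p
    rw [mem_iUnion]
    have hx := top_or_lvl_lt n p.1
    have hy := top_or_lvl_lt n p.2
    have hx' : Spec n p.1 (node n n true) ∨ Spec n p.1 (node n n false) := by
      rcases hx with h | h | h
      · exact Or.inl (Or.inl h)
      · exact Or.inr (Or.inl h)
      · exact Or.inl (Or.inr (by rw [lvl_node n n true le_rfl]; exact h))
    have hy' : Spec n p.2 (node n n true) ∨ Spec n p.2 (node n n false) := by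
      rcases hy with h | h | h
      · exact Or.inl (Or.inl h)
      · exact Or.inr (Or.inl h)
      · exact Or.inl (Or.inr (by rw [lvl_node n n true le_rfl]; exact h))
    rcases hx' with h1 | h1 <;> rcases hy' with h2 | h2
    · exact ⟨0, h1, h2⟩
    · exact ⟨1, h1, h2⟩
    · exact ⟨2, h1, h2⟩
    · exact ⟨3, h1, h2⟩
  · intro i
    fin_cases i <;> exact rect_planner n hn _ _

lemma no_planner_fst {n : ℕ} (hn : 1 ≤ n) {Q : Set (SpherePt n × SpherePt n)}
    (hQ : IsOpen Q) {e₁ e₂ f₁ f₂ : Bool}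
    (h1 : (node n n e₁, node n n e₂) ∈ Q) (h2 : (node n n f₁, node n n f₂) ∈ Q)
    (hef : e₁ ≠ f₁) : ¬ AdmitsMotionPlanner Q := by
  rintro ⟨s, hs⟩
  have hlvl0 : ∀ b, lvl n (node n 0 b) = 0 := fun b => lvl_node n 0 b (Nat.zero_le n)
  have hlvln : ∀ c, lvl n (node n n c) = n := fun c => lvl_node n n c le_rfl
  have hy0 : ∀ c : Bool, Spec n (node n 0 false) (node n n c) :=
    fun c => Or.inr (by rw [hlvl0, hlvln]; omega)
  have slice : ∀ x : SpherePt n, (x, node n 0 false) ∈ Q := by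
    intro x
    have hcase : ∀ c : Bool, (node n n c, node n 0 false) ∈ Q := by
      intro c
      have hc : c = e₁ ∨ c = f₁ :=
        (by decide : ∀ c e f : Bool, e ≠ f → c = e ∨ c = f) c e₁ f₁ hef
      rcases hc with rfl | rfl
      · exact (Specializes.prod (specializes_refl _)
          ((spec_iff n _ _).1 (hy0 e₂))).mem_open hQ h1
      · exact (Specializes.prod (specializes_refl _)
          ((spec_iff n _ _).1 (hy0 f₂))).mem_open hQ h2
    rcases top_or_lvl_lt n x with h | h | h
    · rw [h]; exact hcase true
    · rw [h]; exact hcase false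
    · exact (Specializes.prod ((spec_iff n _ _).1 (Or.inr (by rw [hlvln]; exact h)))
        ((spec_iff n _ _).1 (hy0 e₂))).mem_open hQ h1
  haveI : Finite Q := Subtype.finite
  haveI : Finite C(Q, SpherePt n) := Finite.of_injective _ DFunLike.coe_injective
  set S : Set C(Q, SpherePt n) :=
    {g | ∀ q : Q, (∀ x : SpherePt n, (x, (q : SpherePt n × SpherePt n).2) ∈ Q) →
      g q = (q : SpherePt n × SpherePt n).1} with hSdef
  have pres : ∀ g g' : C(Q, SpherePt n), g ∈ S → (g' ⤳ g ∨ g ⤳ g') → g' ∈ S := by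
    intro g g' hg hcmp q hq
    obtain ⟨⟨a0, b0⟩, hab⟩ := q
    have hψmono : ∀ a b : SpherePt n, Spec n a b →
        Spec n (g' ⟨(a, b0), hq a⟩) (g' ⟨(b, b0), hq b⟩) := by
      intro a b hab'
      refine (spec_iff n _ _).2 ?_
      refine Specializes.map ?_ g'.continuous
      exact subtype_specializes
        (Specializes.prod ((spec_iff n _ _).1 hab') (specializes_refl _))
    have hgid : ∀ a : SpherePt n, g ⟨(a, b0), hq a⟩ = a := fun a => hg ⟨(a, b0), hq a⟩ hq
    show g' ⟨(a0, b0), hab⟩ = a0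
    rcases hcmp with hc | hc
    · refine eq_id_of_spec_le (ψ := fun a => g' ⟨(a, b0), hq a⟩) hψmono ?_ a0
      intro a
      have h' : g' ⟨(a, b0), hq a⟩ ⤳ g ⟨(a, b0), hq a⟩ :=
        hc.map (continuous_eval_const _)
      rw [hgid a] at h'
      exact (spec_iff n _ _).2 h'
    · refine eq_id_of_spec_ge (ψ := fun a => g' ⟨(a, b0), hq a⟩) hψmono ?_ a0
      intro a
      have h' : g ⟨(a, b0), hq a⟩ ⤳ g' ⟨(a, b0), hq a⟩ :=
        hc.map (continuous_eval_const _)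
      rw [hgid a] at h'
      exact (spec_iff n _ _).2 h'
  have hSopen : IsOpen S := isOpen_of_spec_closed (fun g hg g' h => pres g g' hg (Or.inl h))
  have hSclosed : IsClosed S := by
    rw [← isOpen_compl_iff]
    apply isOpen_of_spec_closed
    intro g hg g' hsp hg'S
    exact hg (pres g' g hg'S (Or.inr hsp))
  let γ : C(unitInterval, C(Q, SpherePt n)) :=
    ContinuousMap.curry ((ContinuousMap.uncurry s).comp
      ((Homeomorph.prodComm unitInterval Q : C(unitInterval × Q, Q × unitInterval))))
  have hγ : ∀ t q, γ t q = s q t := fun _ _ => rfl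
  have h0 : (0 : unitInterval) ∈ γ ⁻¹' S := by
    rw [Set.mem_preimage]
    intro q _
    rw [hγ]
    exact congrArg Prod.fst (hs q)
  have huniv : γ ⁻¹' S = univ :=
    IsClopen.eq_univ ⟨hSclosed.preimage γ.continuous, hSopen.preimage γ.continuous⟩ ⟨0, h0⟩
  have h1S : γ 1 ∈ S := by
    have : (1 : unitInterval) ∈ γ ⁻¹' S := huniv ▸ mem_univ _
    exact this
  set q₀ : Q := ⟨(node n 0 true, node n 0 false), slice _⟩ with hq₀
  have hA : γ 1 q₀ = node n 0 true := h1S q₀ (fun x => slice x)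
  have hB : γ 1 q₀ = node n 0 false := by
    rw [hγ]
    exact congrArg Prod.snd (hs q₀)
  exact node_ne n 0 (hA.symm.trans hB)

lemma no_planner {n : ℕ} (hn : 1 ≤ n) {Q : Set (SpherePt n × SpherePt n)}
    (hQ : IsOpen Q) {e₁ e₂ f₁ f₂ : Bool}
    (h1 : (node n n e₁, node n n e₂) ∈ Q) (h2 : (node n n f₁, node n n f₂) ∈ Q)
    (hne : (e₁, e₂) ≠ (f₁, f₂)) : ¬ AdmitsMotionPlanner Q := by
  by_cases hef : e₁ = f₁
  · subst hef
    have he2 : e₂ ≠ f₂ := fun hh => hne (by rw [hh])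
    rintro ⟨s, hs⟩
    have hQ' : IsOpen (Prod.swap ⁻¹' Q) := hQ.preimage continuous_swap
    have h1' : (node n n e₂, node n n e₁) ∈ Prod.swap ⁻¹' Q := h1
    have h2' : (node n n f₂, node n n e₁) ∈ Prod.swap ⁻¹' Q := h2
    refine no_planner_fst hn hQ' h1' h2' he2 ?_
    let swapQ : C(Prod.swap ⁻¹' Q, Q) :=
      ⟨fun q => ⟨(q : SpherePt n × SpherePt n).swap, q.2⟩,
        Continuous.subtype_mk (continuous_swap.comp continuous_subtype_val) _⟩
    let symmCM : C(unitInterval, unitInterval) :=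
      ⟨unitInterval.symm, unitInterval.continuous_symm⟩
    refine ⟨⟨fun q => (s (swapQ q)).comp symmCM,
      (ContinuousMap.continuous_precomp symmCM).comp
        (s.continuous.comp swapQ.continuous)⟩, ?_⟩
    intro q'
    have h := hs (swapQ q')
    show (s (swapQ q') (unitInterval.symm 0), s (swapQ q') (unitInterval.symm 1)) = _
    rw [unitInterval.symm_zero, unitInterval.symm_one]
    have h1c : s (swapQ q') 1 = (q' : SpherePt n × SpherePt n).1 := congrArg Prod.snd h
    have h0c : s (swapQ q') 0 = (q' : SpherePt n × SpherePt n).2 := congrArg Prod.fst h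
    rw [h1c, h0c]
  · exact no_planner_fst hn hQ h1 h2 hef

lemma lower_bound {n : ℕ} (hn : 1 ≤ n) {k : ℕ} (h : TCCover (SpherePt n) k) : 4 ≤ k := by
  by_contra hk
  push_neg at hk
  obtain ⟨Q, hop, hcov, hpl⟩ := h
  have hmem : ∀ bd : Bool × Bool, ∃ i, (node n n bd.1, node n n bd.2) ∈ Q i := by
    intro bd
    have : (node n n bd.1, node n n bd.2) ∈ ⋃ i, Q i := by rw [hcov]; exact mem_univ _
    exact mem_iUnion.1 this
  choose F hF using hmem
  have hcard : Fintype.card (Fin k) < Fintype.card (Bool × Bool) := by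
    simp only [Fintype.card_fin, Fintype.card_prod, Fintype.card_bool]
    omega
  obtain ⟨p, p', hne, heq⟩ := Fintype.exists_ne_map_eq_of_card_lt F hcard
  have h2 := hF p'
  rw [← heq] at h2
  exact no_planner hn (hop (F p)) (hF p) h2 (by simpa using hne) (hpl (F p))


/-- For every `n ≥ 1`, the topological complexity of the minimal
finite model `𝕊ⁿ` of the `n`-sphere equals 4: `TC(𝕊ⁿ) = 4`. -/
theorem tc_minimal_sphere (n : ℕ) (hn : 1 ≤ n) :
    @topologicalComplexity (SpherePt n) (sphereTop n) = 4 := by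
  have h4 : TCCover (SpherePt n) 4 := upper_bound n hn
  apply le_antisymm
  · exact Nat.sInf_le h4
  · exact le_csInf ⟨4, h4⟩ fun k hk => lower_bound hn hk
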